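/- Let a be a positive integer and define f̃₁(x) = 2 − (∏_{i=1}^{2a−1} (x − (2i+1))) / (∏_{i=1}^{2a} (x − 2i)). Then f̃₁ has no real critical points: for every real x with ∏_{i=1}^{2a} (x − 2i) ≠ 0, the derivative of f̃₁ at x is strictly positive; in particular f̃₁ is strictly monotone increasing on each interval of ℝ not containing a pole. -/

import Mathlib

open Finset Polynomial

/-- The rational function f̃₁(x) = 2 − (∏_{i=1}^{2a−1} (x−(2i+1))) / (∏_{i=1}^{2a} (x−2i))
as a real function. -/
noncomputable def ftilde (a : ℕ) (x : ℝ) : ℝ :=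
  2 - (∏ i ∈ Finset.Icc 1 (2 * a - 1), (x - (2 * (i : ℝ) + 1))) /
      (∏ i ∈ Finset.Icc 1 (2 * a), (x - 2 * (i : ℝ)))

namespace Stmt17

/-- The node map. -/
noncomputable def vv : ℕ → ℝ := fun i => 2 * (i : ℝ)

/-- The numerator polynomial. -/
noncomputable def P (a : ℕ) : Polynomial ℝ :=
  ∏ i ∈ Finset.Icc 1 (2 * a - 1), (X - C (2 * (i : ℝ) + 1))

/-- Partial fraction coefficients. -/
noncomputable def c (a : ℕ) (k : ℕ) : ℝ :=
  Lagrange.nodalWeight (Finset.Icc 1 (2 * a)) vv k * (P a).eval (2 * (k : ℝ))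

/-- The partial fraction form of ftilde. -/
noncomputable def g (a : ℕ) (x : ℝ) : ℝ :=
  2 - ∑ k ∈ Finset.Icc 1 (2 * a), c a k * (x - 2 * (k : ℝ))⁻¹

lemma hvs (a : ℕ) : Set.InjOn vv (Finset.Icc 1 (2 * a) : Finset ℕ) := by
  intro i _ j _ h
  have : (i : ℝ) = (j : ℝ) := by unfold vv at h; linarith
  exact_mod_cast this

lemma eval_P (a : ℕ) (x : ℝ) :
    (P a).eval x = ∏ i ∈ Finset.Icc 1 (2 * a - 1), (x - (2 * (i : ℝ) + 1)) := by
  simp [P, eval_prod]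

lemma degP (a : ℕ) (ha : 0 < a) : (P a).degree < (#(Finset.Icc 1 (2 * a)) : ℕ) := by
  have h1 : (P a).natDegree = 2 * a - 1 := by
    rw [P, natDegree_prod _ _ (fun i _ => X_sub_C_ne_zero _)]
    simp only [natDegree_X_sub_C]
    simp [Nat.card_Icc]
  refine lt_of_le_of_lt (degree_le_natDegree) ?_
  rw [h1, Nat.card_Icc]
  exact_mod_cast (by omega : 2 * a - 1 < 2 * a + 1 - 1)

lemma ftilde_eq (a : ℕ) (ha : 0 < a) (x : ℝ)
    (hx : ∀ i ∈ Finset.Icc 1 (2 * a), x ≠ 2 * (i : ℝ)) : ftilde a x = g a x := by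
  have hQ : (∏ i ∈ Finset.Icc 1 (2 * a), (x - 2 * (i : ℝ))) ≠ 0 :=
    Finset.prod_ne_zero_iff.mpr fun i hi => sub_ne_zero.mpr (hx i hi)
  have hx' : ∀ i ∈ Finset.Icc 1 (2 * a), x ≠ vv i := hx
  have hinterp := Lagrange.eq_interpolate (hvs a) (degP a ha)
  have hev := congrArg (eval x) hinterp
  rw [Lagrange.eval_interpolate_not_at_node _ hx', Lagrange.eval_nodal] at hev
  have hnodal : (∏ i ∈ Finset.Icc 1 (2 * a), (x - vv i))
      = ∏ i ∈ Finset.Icc 1 (2 * a), (x - 2 * (i : ℝ)) := rfl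
  rw [eval_P] at hev
  rw [ftilde, g, hev, hnodal, mul_div_cancel_left₀ _ hQ]
  congr 1
  refine Finset.sum_congr rfl fun k hk => ?_
  simp only [c, vv]
  rw [eval_P]
  ring

lemma c_pos (a : ℕ) (ha : 0 < a) (k : ℕ) (hk : k ∈ Finset.Icc 1 (2 * a)) : 0 < c a k := by
  obtain ⟨hk1, hk2⟩ := Finset.mem_Icc.mp hk
  set D : ℝ := ∏ j ∈ (Finset.Icc 1 (2 * a)).erase k, (2 * (k : ℝ) - 2 * (j : ℝ)) with hD
  set N : ℝ := ∏ i ∈ Finset.Icc 1 (2 * a - 1), (2 * (k : ℝ) - (2 * (i : ℝ) + 1)) with hN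
  have hcval : c a k = D⁻¹ * N := by
    rw [c, eval_P, Lagrange.nodalWeight, ← Finset.prod_inv_distrib]
    simp only [vv, hD, hN]
  have hDne : D ≠ 0 := by
    refine Finset.prod_ne_zero_iff.mpr fun j hj => sub_ne_zero.mpr fun h => ?_
    have : (k : ℝ) = (j : ℝ) := by linarith
    exact (Finset.mem_erase.mp hj).1 (by exact_mod_cast this.symm)
  have hDN : 0 < D * N := by
    rcases eq_or_lt_of_le hk2 with heq | hlt
    · -- k = 2a : all factors positive
      have hset : (Finset.Icc 1 (2 * a)).erase k = Finset.Icc 1 (2 * a - 1) := by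
        ext j; simp only [Finset.mem_erase, Finset.mem_Icc]; omega
      have hDpos : 0 < D := by
        rw [hD, hset]
        refine Finset.prod_pos fun j hj => ?_
        obtain ⟨_, hj2⟩ := Finset.mem_Icc.mp hj
        have : (j : ℝ) < (k : ℝ) := by exact_mod_cast (by omega : j < k)
        linarith
      have hNpos : 0 < N := by
        rw [hN]
        refine Finset.prod_pos fun j hj => ?_
        obtain ⟨_, hj2⟩ := Finset.mem_Icc.mp hj
        have : (j : ℝ) + 1 ≤ (k : ℝ) := by exact_mod_cast (by omega : j + 1 ≤ k)
        linarith
      exact mul_pos hDpos hNpos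
    · -- k < 2a
      have hmem2a : 2 * a ∈ (Finset.Icc 1 (2 * a)).erase k :=
        Finset.mem_erase.mpr ⟨by omega, Finset.mem_Icc.mpr ⟨by omega, le_refl _⟩⟩
      have hDsplit : D = (2 * (k : ℝ) - 2 * ((2 * a : ℕ) : ℝ)) *
          ∏ j ∈ (Finset.Icc 1 (2 * a - 1)).erase k, (2 * (k : ℝ) - 2 * (j : ℝ)) := by
        rw [hD, ← Finset.mul_prod_erase _ _ hmem2a]
        congr 1
        apply Finset.prod_congr _ fun _ _ => rfl
        ext j; simp only [Finset.mem_erase, Finset.mem_Icc]; omega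
      have hkmem : k ∈ Finset.Icc 1 (2 * a - 1) := Finset.mem_Icc.mpr ⟨hk1, by omega⟩
      have hNsplit : N = (2 * (k : ℝ) - (2 * (k : ℝ) + 1)) *
          ∏ j ∈ (Finset.Icc 1 (2 * a - 1)).erase k, (2 * (k : ℝ) - (2 * (j : ℝ) + 1)) := by
        rw [hN, ← Finset.mul_prod_erase _ _ hkmem]
      have hprodpos : 0 < ∏ j ∈ (Finset.Icc 1 (2 * a - 1)).erase k,
          ((2 * (k : ℝ) - 2 * (j : ℝ)) * (2 * (k : ℝ) - (2 * (j : ℝ) + 1))) := by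
        refine Finset.prod_pos fun j hj => ?_
        have hjk : j ≠ k := (Finset.mem_erase.mp hj).1
        rcases lt_or_gt_of_ne hjk with h | h
        · have h1 : (j : ℝ) + 1 ≤ (k : ℝ) := by exact_mod_cast (by omega : j + 1 ≤ k)
          have := mul_pos (by linarith : (0:ℝ) < 2 * (k : ℝ) - 2 * (j : ℝ))
            (by linarith : (0:ℝ) < 2 * (k : ℝ) - (2 * (j : ℝ) + 1))
          linarith
        · have h1 : (k : ℝ) + 1 ≤ (j : ℝ) := by exact_mod_cast (by omega : k + 1 ≤ j)
          have := mul_pos_of_neg_of_neg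
            (by linarith : 2 * (k : ℝ) - 2 * (j : ℝ) < 0)
            (by linarith : 2 * (k : ℝ) - (2 * (j : ℝ) + 1) < 0)
          linarith
      have hfac : (0:ℝ) < ((2 * a : ℕ) : ℝ) * 2 - 2 * (k : ℝ) := by
        have : (k : ℝ) < ((2 * a : ℕ) : ℝ) := by exact_mod_cast hlt
        linarith
      have : D * N = (((2 * a : ℕ) : ℝ) * 2 - 2 * (k : ℝ)) *
          ∏ j ∈ (Finset.Icc 1 (2 * a - 1)).erase k,
            ((2 * (k : ℝ) - 2 * (j : ℝ)) * (2 * (k : ℝ) - (2 * (j : ℝ) + 1))) := by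
        rw [hDsplit, hNsplit, Finset.prod_mul_distrib]
        ring
      rw [this]
      exact mul_pos hfac hprodpos
  have : c a k = (D * N) / D ^ 2 := by
    rw [hcval]; field_simp
  rw [this]
  exact div_pos hDN (by positivity)

lemma hasDerivAt_g (a : ℕ) (x : ℝ)
    (hx : ∀ i ∈ Finset.Icc 1 (2 * a), x ≠ 2 * (i : ℝ)) :
    HasDerivAt (g a) (∑ k ∈ Finset.Icc 1 (2 * a), c a k * ((x - 2 * (k : ℝ)) ^ 2)⁻¹) x := by
  have hsum : HasDerivAt (fun t => ∑ k ∈ Finset.Icc 1 (2 * a), c a k * (t - 2 * (k : ℝ))⁻¹)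
      (∑ k ∈ Finset.Icc 1 (2 * a), c a k * (-1 / (x - 2 * (k : ℝ)) ^ 2)) x := by
    refine HasDerivAt.fun_sum fun k hk => ?_
    have h1 : HasDerivAt (fun t : ℝ => t - 2 * (k : ℝ)) 1 x := (hasDerivAt_id x).sub_const _
    have h2 := h1.inv (sub_ne_zero.mpr (hx k hk))
    simpa using h2.const_mul (c a k)
  have := (hasDerivAt_const x (2:ℝ)).sub hsum
  refine HasDerivAt.congr_deriv (f := g a) this ?_
  rw [zero_sub, ← Finset.sum_neg_distrib]
  exact Finset.sum_congr rfl fun k _ => by ring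

lemma deriv_pos (a : ℕ) (ha : 0 < a) (x : ℝ)
    (hQ : (∏ i ∈ Finset.Icc 1 (2 * a), (x - 2 * (i : ℝ))) ≠ 0) :
    0 < deriv (ftilde a) x := by
  have hx : ∀ i ∈ Finset.Icc 1 (2 * a), x ≠ 2 * (i : ℝ) := by
    intro i hi
    exact sub_ne_zero.mp (Finset.prod_ne_zero_iff.mp hQ i hi)
  have hev : ftilde a =ᶠ[nhds x] g a := by
    have h1 : ∀ᶠ y in nhds x, ∀ i ∈ Finset.Icc 1 (2 * a), y ≠ 2 * (i : ℝ) := by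
      rw [Filter.eventually_all_finset]
      exact fun i hi => eventually_ne_nhds (hx i hi)
    exact h1.mono fun y hy => ftilde_eq a ha y hy
  rw [hev.deriv_eq, (hasDerivAt_g a x hx).deriv]
  refine Finset.sum_pos (fun k hk => ?_) (Finset.nonempty_Icc.mpr (by omega))
  have hne : x - 2 * (k : ℝ) ≠ 0 := sub_ne_zero.mpr (hx k hk)
  exact mul_pos (c_pos a ha k hk) (by positivity)

end Stmt17

/-- f̃₁ has no real critical points: at every real point which is not a
pole its derivative is strictly positive; in particular f̃₁ is strictly monotone
increasing on each interval of ℝ not containing a pole. -/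
theorem stmt_17 (a : ℕ) (ha : 0 < a) :
    (∀ x : ℝ, (∏ i ∈ Finset.Icc 1 (2 * a), (x - 2 * (i : ℝ))) ≠ 0 →
      0 < deriv (ftilde a) x) ∧
    (∀ x y : ℝ, x < y →
      (∀ t ∈ Set.Icc x y, (∏ i ∈ Finset.Icc 1 (2 * a), (t - 2 * (i : ℝ))) ≠ 0) →
      ftilde a x < ftilde a y) := by
  refine ⟨Stmt17.deriv_pos a ha, fun x y hxy hQ => ?_⟩
  have hcont : ContinuousOn (ftilde a) (Set.Icc x y) := by
    unfold ftilde
    refine ContinuousOn.sub continuousOn_const ?_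
    refine ContinuousOn.div ?_ ?_ hQ
    · exact (continuous_finset_prod _ fun i _ => by continuity).continuousOn
    · exact (continuous_finset_prod _ fun i _ => by continuity).continuousOn
  have hmono := strictMonoOn_of_deriv_pos (convex_Icc x y) hcont (fun t ht => by
    rw [interior_Icc] at ht
    exact Stmt17.deriv_pos a ha t (hQ t (Set.Ioo_subset_Icc_self ht)))
  exact hmono (Set.left_mem_Icc.2 hxy.le) (Set.right_mem_Icc.2 hxy.le) hxy
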